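/- Let K ⊆ ℝ^d be a convex set of diameter at most D with D ≥ 1/√2, T ≥ 1, λ, G > 0, and let ℓ₁, …, ℓ_T : ℝ^d → ℝ be differentiable functions that are λ-strongly convex on K in the paper's convention (ℓ_t(μ) − ℓ_t(μ₀) ≤ ⟨∇ℓ_t(μ), μ − μ₀⟩ − λ‖μ − μ₀‖² for μ, μ₀ ∈ K) with ‖∇ℓ_t(x)‖ ≤ G for all x ∈ K. Set ε := 2/D² and η := D/√2; write ∇_t := ∇ℓ_t(μ̂_t), G₀ := ε·I_d, G_t := G_{t−1} + ∇_t∇_tᵀ, H_t := G_t^{1/2}, μ̂_{temp,t+1} := μ̂_t − η·H_t⁻¹∇_t. Suppose μ̂₁, …, μ̂_{T+1} ∈ K satisfy, for every 1 ≤ t ≤ T, the ADJUST contraction (μ̂_{t+1} − ν_{t+1})ᵀ H_t (μ̂_{t+1} − ν_{t+1}) ≤ (μ̂_{temp,t+1} − ν_t)ᵀ H_t (μ̂_{temp,t+1} − ν_t), and suppose ν₁, …, ν_{T+1} ∈ K satisfy ℓ_t(ν_{t+1}) − ℓ_t(μ*_t) ≤ G²(1 + log T)/(λT) for every t, where μ*_t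 ∈ K minimises ℓ_t over K. Then Σ_{t=1}^{T} ℓ_t(μ̂_t) − Σ_{t=1}^{T} ℓ_t(μ*_t) ≤ G·Σ_{t=1}^{T}‖ν_{t+1} − ν_t‖ − λ·Σ_{t=1}^{T}‖ν_{t+1} − ν_t‖² + √2·D·(1 + Tr(H_T)) + (G²/λ)·(1 + log T). -/

import Mathlib

open Matrix RealInnerProductSpace Finset

section Helpers
open Matrix Finset RealInnerProductSpace

variable {n : Type*} [Fintype n] [DecidableEq n]

private lemma dot_vecMulVec_mulVec (v : n → ℝ) (x : n → ℝ) :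
    x ⬝ᵥ (vecMulVec v v) *ᵥ x = (v ⬝ᵥ x) ^ 2 := by
  simp only [dotProduct, mulVec, vecMulVec_apply, dotProduct, sq, Finset.sum_mul_sum]
  refine Finset.sum_congr rfl fun i _ => ?_
  rw [Finset.mul_sum]
  exact Finset.sum_congr rfl fun j _ => by ring

private lemma psd_vecMulVec (v : n → ℝ) : (vecMulVec v v).PosSemidef := by
  rw [posSemidef_iff_dotProduct_mulVec]
  constructor
  · ext i j
    simp [vecMulVec_apply, mul_comm]
  · intro x
    simpa [dot_vecMulVec_mulVec v x] using sq_nonneg (v ⬝ᵥ x)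

private lemma trace_nonneg_of_psd {M : Matrix n n ℝ} (hM : M.PosSemidef) : 0 ≤ M.trace := by
  rw [Matrix.trace]
  refine Finset.sum_nonneg fun i _ => ?_
  have := hM.dotProduct_mulVec_nonneg (Pi.single i 1)
  simpa [Matrix.diag] using this

private lemma trace_mul_psd_nonneg {P Q : Matrix n n ℝ} (hP : P.PosSemidef) (hQ : Q.PosSemidef) :
    0 ≤ (P * Q).trace := by
  obtain ⟨B, rfl⟩ : ∃ B : Matrix n n ℝ, P = Bᴴ * B := by
    open scoped MatrixOrder in exact CStarAlgebra.nonneg_iff_eq_star_mul_self.mp hP.nonneg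
  rw [Matrix.mul_assoc, Matrix.trace_mul_comm]
  exact trace_nonneg_of_psd (hQ.mul_mul_conjTranspose_same B)

private lemma trace_mul_vecMulVec (M : Matrix n n ℝ) (v : n → ℝ) :
    (M * vecMulVec v v).trace = v ⬝ᵥ M *ᵥ v := by
  simp only [Matrix.trace, Matrix.diag, Matrix.mul_apply, vecMulVec_apply, dotProduct, mulVec,
    dotProduct]
  refine Finset.sum_congr rfl fun i _ => ?_
  rw [Finset.mul_sum]
  exact Finset.sum_congr rfl fun j _ => by ring

private lemma quadform_le_trace {M : Matrix n n ℝ} (hM : M.PosSemidef) (x : n → ℝ) :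
    x ⬝ᵥ M *ᵥ x ≤ (x ⬝ᵥ x) * M.trace := by
  obtain ⟨B, rfl⟩ : ∃ B : Matrix n n ℝ, M = Bᴴ * B := by
    open scoped MatrixOrder in exact CStarAlgebra.nonneg_iff_eq_star_mul_self.mp hM.nonneg
  have h1 : x ⬝ᵥ (Bᴴ * B) *ᵥ x = (B *ᵥ x) ⬝ᵥ (B *ᵥ x) := by
    rw [← Matrix.mulVec_mulVec, Matrix.dotProduct_mulVec]
    congr 1
    rw [Matrix.vecMul_conjTranspose]
    simp
  have h2 : (Bᴴ * B).trace = ∑ j, ∑ i, B i j ^ 2 := by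
    simp [Matrix.trace, Matrix.diag, Matrix.mul_apply, conjTranspose_apply, sq]
  rw [h1, h2]
  simp only [dotProduct, mulVec, dotProduct]
  calc ∑ i, (∑ j, B i j * x j) * (∑ j, B i j * x j)
      ≤ ∑ i, (∑ j, B i j ^ 2) * (∑ j, x j ^ 2) := by
        refine Finset.sum_le_sum fun i _ => ?_
        have := Finset.sum_mul_sq_le_sq_mul_sq Finset.univ (fun j => B i j) x
        rw [← sq]
        exact this
    _ = (∑ j, x j * x j) * ∑ j, ∑ i, B i j ^ 2 := by
        rw [← Finset.sum_mul, mul_comm, Finset.sum_comm]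
        congr 1
        exact Finset.sum_congr rfl fun j _ => by rw [sq]

private lemma symm_dot_mulVec {M : Matrix n n ℝ} (hM : M.IsHermitian) (v w : n → ℝ) :
    v ⬝ᵥ M *ᵥ w = (M *ᵥ v) ⬝ᵥ w := by
  have ht : Mᵀ = M := by
    have := hM.eq
    rwa [Matrix.conjTranspose_eq_transpose_of_trivial] at this
  conv_lhs => rw [Matrix.dotProduct_mulVec, ← ht, Matrix.vecMul_transpose]

private lemma posDef_of_sq {H G : Matrix n n ℝ} (hH : H.PosSemidef) (hsq : H * H = G)
    (hG : G.PosDef) : H.PosDef := by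
  refine posDef_iff_dotProduct_mulVec.mpr ⟨hH.1, fun x hx => ?_⟩
  rcases lt_or_eq_of_le (hH.dotProduct_mulVec_nonneg x) with h | h
  · exact h
  · exfalso
    have h0 : H *ᵥ x = 0 := (hH.dotProduct_mulVec_zero_iff x).mp h.symm
    have hGx : G *ᵥ x = 0 := by
      rw [← hsq, ← Matrix.mulVec_mulVec, h0, Matrix.mulVec_zero]
    have hlt := hG.dotProduct_mulVec_pos hx
    rw [hGx] at hlt
    simp at hlt

private lemma psd_sub_of_sq_psd {A B : Matrix n n ℝ} (hA : A.PosSemidef) (hB : B.PosSemidef)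
    (h : (B * B - A * A).PosSemidef) : (B - A).PosSemidef := by
  have hM : (B - A).IsHermitian := hB.1.sub hA.1
  refine hM.posSemidef_iff_eigenvalues_nonneg.mpr fun i => show (0:ℝ) ≤ _ from ?_
  by_contra hneg
  push_neg at hneg
  set μ := hM.eigenvalues i with hμ
  set v : n → ℝ := ⇑(hM.eigenvectorBasis i) with hv
  have hev : (B - A) *ᵥ v = μ • v := hM.mulVec_eigenvectorBasis i
  have hv1 : v ⬝ᵥ v = 1 := by
    have hnorm : ‖hM.eigenvectorBasis i‖ = 1 := hM.eigenvectorBasis.orthonormal.1 i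
    have : (inner ℝ (hM.eigenvectorBasis i) (hM.eigenvectorBasis i) : ℝ) = 1 := by
      rw [real_inner_self_eq_norm_sq, hnorm]; norm_num
    rw [← this]
    simp only [PiLp.inner_apply, RCLike.inner_apply, conj_trivial, dotProduct]
    try rfl
  have hAv : A *ᵥ v = B *ᵥ v - μ • v := by
    have := hev
    rw [Matrix.sub_mulVec] at this
    linear_combination (norm := module) -this
  have hq : 0 ≤ v ⬝ᵥ (B * B - A * A) *ᵥ v := by simpa using h.dotProduct_mulVec_nonneg v
  have hBB : v ⬝ᵥ (B * B) *ᵥ v = (B *ᵥ v) ⬝ᵥ (B *ᵥ v) := by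
    rw [← Matrix.mulVec_mulVec, symm_dot_mulVec hB.1]
  have hAA : v ⬝ᵥ (A * A) *ᵥ v = (A *ᵥ v) ⬝ᵥ (A *ᵥ v) := by
    rw [← Matrix.mulVec_mulVec, symm_dot_mulVec hA.1]
  have hc : 0 ≤ v ⬝ᵥ B *ᵥ v := by simpa using hB.dotProduct_mulVec_nonneg v
  have hexp : (A *ᵥ v) ⬝ᵥ (A *ᵥ v) =
      (B *ᵥ v) ⬝ᵥ (B *ᵥ v) - 2 * μ * (v ⬝ᵥ B *ᵥ v) + μ ^ 2 * (v ⬝ᵥ v) := by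
    rw [hAv]
    simp only [dotProduct_sub, sub_dotProduct, dotProduct_smul,
      smul_dotProduct, smul_eq_mul]
    have hcomm : (B *ᵥ v) ⬝ᵥ v = v ⬝ᵥ B *ᵥ v := dotProduct_comm _ _
    rw [hcomm]
    ring
  rw [Matrix.sub_mulVec, dotProduct_sub, hBB, hAA, hexp, hv1] at hq
  nlinarith [mul_nonneg (le_of_lt (neg_pos.mpr hneg)) hc]

private lemma trace_inv_sq_ge {A B : Matrix n n ℝ} (hA : A.PosDef) (hBh : B.IsHermitian) :
    2 * B.trace - A.trace ≤ (A⁻¹ * (B * B)).trace := by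
  have hdet : IsUnit A.det := hA.det_pos.ne'.isUnit
  have hinv1 : A * A⁻¹ = 1 := Matrix.mul_nonsing_inv A hdet
  have hinv2 : A⁻¹ * A = 1 := Matrix.nonsing_inv_mul A hdet
  have hMh : (B - A).IsHermitian := hBh.sub hA.isHermitian
  have hsq : ((B - A) * (B - A)).PosSemidef := by
    have : (B - A) * (B - A) = (B - A)ᴴ * (B - A) := by rw [hMh.eq]
    rw [this]
    exact posSemidef_conjTranspose_mul_self _
  have h0 : 0 ≤ (A⁻¹ * ((B - A) * (B - A))).trace :=
    trace_mul_psd_nonneg hA.inv.posSemidef hsq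
  have e1 : A⁻¹ * ((B - A) * (B - A)) =
      A⁻¹ * (B * B) - A⁻¹ * B * A - (A⁻¹ * A) * B + (A⁻¹ * A) * A := by noncomm_ring
  have e2 : (A⁻¹ * B * A).trace = B.trace := by
    rw [Matrix.trace_mul_cycle, hinv1, Matrix.one_mul]
  rw [e1] at h0
  rw [Matrix.trace_add, Matrix.trace_sub, Matrix.trace_sub, e2, hinv2, Matrix.one_mul,
    Matrix.one_mul] at h0
  linarith

private lemma expand_temp {Ht : Matrix n n ℝ} (hPD : Ht.PosDef) (x gt : n → ℝ) (η : ℝ) :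
    (x - η • (Ht⁻¹ *ᵥ gt)) ⬝ᵥ Ht *ᵥ (x - η • (Ht⁻¹ *ᵥ gt)) =
      x ⬝ᵥ Ht *ᵥ x - 2 * η * (gt ⬝ᵥ x) + η ^ 2 * (gt ⬝ᵥ Ht⁻¹ *ᵥ gt) := by
  have hdet : IsUnit Ht.det := hPD.det_pos.ne'.isUnit
  set y := Ht⁻¹ *ᵥ gt with hy
  have hHy : Ht *ᵥ y = gt := by
    rw [hy, Matrix.mulVec_mulVec, Matrix.mul_nonsing_inv Ht hdet, Matrix.one_mulVec]
  have h1 : y ⬝ᵥ Ht *ᵥ x = gt ⬝ᵥ x := by rw [symm_dot_mulVec hPD.isHermitian, hHy]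
  have h2 : x ⬝ᵥ Ht *ᵥ y = gt ⬝ᵥ x := by rw [hHy, dotProduct_comm]
  have h3 : y ⬝ᵥ Ht *ᵥ y = gt ⬝ᵥ y := by rw [hHy, dotProduct_comm]
  rw [Matrix.mulVec_sub, Matrix.mulVec_smul, sub_dotProduct, smul_dotProduct,
    dotProduct_sub, dotProduct_sub, dotProduct_smul, dotProduct_smul,
    smul_eq_mul, smul_eq_mul, smul_eq_mul, h1, h2, h3]
  rw [hy] at *
  try ring_nf

end Helpers


/-- Theorem 5 (dynamic regret of Dynamic AdaGrad against the true minimisers): for `λ`-strongly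
convex losses (paper's convention) with `G`-bounded gradients, with `ε = 2/D²`, `η = D/√2`,
AdaGrad matrices `G_t` and their positive semidefinite square roots `H_t`, ADJUST contraction in
the `H_t`-norm, and advice `ν` satisfying `ℓ_t(ν_{t+1}) − ℓ_t(μ*_t) ≤ G²(1 + log T)/(λT)`, we get
`Σℓ_t(μ̂_t) − Σℓ_t(μ*_t) ≤ G·P_T(ν) − λ·S_T(ν) + √2·D·(1 + Tr(H_T)) + (G²/λ)(1 + log T)`. -/
theorem dadagrad_dynamic_regret {d : ℕ}
    (K : Set (EuclideanSpace ℝ (Fin d))) (hK : Convex ℝ K)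
    (D : ℝ) (hD : 1 / Real.sqrt 2 ≤ D) (hdiam : ∀ x ∈ K, ∀ y ∈ K, ‖x - y‖ ≤ D)
    (T : ℕ) (hT : 1 ≤ T) (lam G : ℝ) (hlam : 0 < lam) (hG : 0 < G)
    (η : ℝ) (hη : η = D / Real.sqrt 2)
    (ℓ : ℕ → EuclideanSpace ℝ (Fin d) → ℝ)
    (g : ℕ → EuclideanSpace ℝ (Fin d) → EuclideanSpace ℝ (Fin d))
    (hdiff : ∀ t, ∀ x, HasGradientAt (ℓ t) (g t x) x)
    (hsc : ∀ t ∈ Icc 1 T, ∀ μ ∈ K, ∀ μ₀ ∈ K,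
      ℓ t μ - ℓ t μ₀ ≤ ⟪g t μ, μ - μ₀⟫ - lam * ‖μ - μ₀‖ ^ 2)
    (hGb : ∀ t ∈ Icc 1 T, ∀ x ∈ K, ‖g t x‖ ≤ G)
    (ε : ℝ) (hε : ε = 2 / D ^ 2)
    (p ν : ℕ → EuclideanSpace ℝ (Fin d))
    (hpK : ∀ t ∈ Icc 1 (T + 1), p t ∈ K) (hνK : ∀ t ∈ Icc 1 (T + 1), ν t ∈ K)
    (Gm H : ℕ → Matrix (Fin d) (Fin d) ℝ)
    (hG0 : Gm 0 = ε • 1)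
    (hGrec : ∀ t ∈ Icc 1 T,
      Gm t = Gm (t - 1) + Matrix.vecMulVec (g t (p t) : Fin d → ℝ) (g t (p t) : Fin d → ℝ))
    (hH : ∀ t ≤ T, (H t).PosSemidef ∧ H t * H t = Gm t)
    (hadj : ∀ t ∈ Icc 1 T,
      (p (t + 1) - ν (t + 1)) ⬝ᵥ (H t).mulVec (p (t + 1) - ν (t + 1)) ≤
      ((p t - η • (EuclideanSpace.equiv (Fin d) ℝ).symm ((H t)⁻¹.mulVec (g t (p t)))) - ν t)
        ⬝ᵥ (H t).mulVec
          ((p t - η • (EuclideanSpace.equiv (Fin d) ℝ).symm ((H t)⁻¹.mulVec (g t (p t))))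
            - ν t))
    (μstar : ℕ → EuclideanSpace ℝ (Fin d)) (hμstarK : ∀ t ∈ Icc 1 T, μstar t ∈ K)
    (hmin : ∀ t ∈ Icc 1 T, ∀ y ∈ K, ℓ t (μstar t) ≤ ℓ t y)
    (hνgood : ∀ t ∈ Icc 1 T,
      ℓ t (ν (t + 1)) - ℓ t (μstar t) ≤ G ^ 2 * (1 + Real.log T) / (lam * T)) :
    ∑ t ∈ Icc 1 T, ℓ t (p t) - ∑ t ∈ Icc 1 T, ℓ t (μstar t) ≤
      G * ∑ t ∈ Icc 1 T, ‖ν (t + 1) - ν t‖ - lam * ∑ t ∈ Icc 1 T, ‖ν (t + 1) - ν t‖ ^ 2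
        + Real.sqrt 2 * D * (1 + (H T).trace) + G ^ 2 / lam * (1 + Real.log T) := by
  classical
  have hs2 : (0:ℝ) < Real.sqrt 2 := by positivity
  have hsq2 : (Real.sqrt 2) ^ 2 = 2 := Real.sq_sqrt (by norm_num)
  have hDpos : 0 < D := lt_of_lt_of_le (by positivity) hD
  have hηpos : 0 < η := by rw [hη]; positivity
  have hεpos : 0 < ε := by rw [hε]; positivity
  have hTpos : (0:ℝ) < T := by exact_mod_cast hT
  have hlogT : 0 ≤ Real.log T := Real.log_nonneg (by exact_mod_cast hT)
  -- inner product = dot product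
  have hinner : ∀ v w : EuclideanSpace ℝ (Fin d), (inner ℝ v w : ℝ) = v ⬝ᵥ w := by
    intro v w
    simp only [PiLp.inner_apply, RCLike.inner_apply, conj_trivial, dotProduct]
    exact Finset.sum_congr rfl fun _ _ => mul_comm _ _
  have hns : ∀ v w : EuclideanSpace ℝ (Fin d),
      (v - w) ⬝ᵥ (v - w) = ‖v - w‖ ^ 2 := by
    intro v w
    have h1 := hinner (v - w) (v - w)
    rw [real_inner_self_eq_norm_sq] at h1
    exact h1.symm
  -- positive definiteness of the AdaGrad matrices
  have hGmPD : ∀ t, t ≤ T → (Gm t).PosDef := by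
    intro t
    induction t with
    | zero =>
      intro _
      rw [hG0, ← Matrix.diagonal_one, ← Matrix.diagonal_smul]
      exact Matrix.PosDef.diagonal (fun i => by simpa using hεpos)
    | succ t ih =>
      intro hle
      have h1 : t + 1 ∈ Icc 1 T := mem_Icc.mpr ⟨by omega, hle⟩
      have h2 := hGrec (t + 1) h1
      simp only [Nat.add_sub_cancel] at h2
      rw [h2]
      exact (ih (by omega)).add_posSemidef (psd_vecMulVec _)
  have hHPD : ∀ t, t ≤ T → (H t).PosDef :=
    fun t ht => posDef_of_sq (hH t ht).1 (hH t ht).2 (hGmPD t ht)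
  -- H is monotone along the iterations
  have hHmono : ∀ t ∈ Icc 1 T, (H t - H (t - 1)).PosSemidef := by
    intro t ht
    rw [mem_Icc] at ht
    refine psd_sub_of_sq_psd (hH (t-1) (by omega)).1 (hH t ht.2).1 ?_
    rw [(hH (t-1) (by omega)).2, (hH t ht.2).2]
    have h2 := hGrec t (mem_Icc.mpr ht)
    rw [h2]
    simpa using psd_vecMulVec (g t (p t) : Fin d → ℝ)
  -- diameter bound
  have hxD : ∀ t ∈ Icc 1 (T+1), (p t - ν t) ⬝ᵥ (p t - ν t) ≤ D ^ 2 := by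
    intro t ht
    rw [hns]
    have h1 := hdiam (p t) (hpK t ht) (ν t) (hνK t ht)
    have h2 : (0:ℝ) ≤ ‖p t - ν t‖ := norm_nonneg _
    nlinarith
  have hxx0 : ∀ t : ℕ, (0:ℝ) ≤ (p t - ν t) ⬝ᵥ (p t - ν t) := by
    intro t
    rw [hns]
    positivity
  -- per-step descent inequality
  have hstep : ∀ t ∈ Icc 1 T,
      2 * η * ((g t (p t) : Fin d → ℝ) ⬝ᵥ (p t - ν t)) ≤
        ((p t - ν t) ⬝ᵥ (H t) *ᵥ (p t - ν t))
        - ((p (t+1) - ν (t+1)) ⬝ᵥ (H t) *ᵥ (p (t+1) - ν (t+1)))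
        + η ^ 2 * ((g t (p t) : Fin d → ℝ) ⬝ᵥ (H t)⁻¹ *ᵥ (g t (p t) : Fin d → ℝ)) := by
    intro t ht
    have htT : t ≤ T := (mem_Icc.mp ht).2
    have hPD := hHPD t htT
    have had := hadj t ht
    have hveq : (p t - η • (EuclideanSpace.equiv (Fin d) ℝ).symm ((H t)⁻¹.mulVec (g t (p t)))) - ν t
        = (p t - ν t) - η • (EuclideanSpace.equiv (Fin d) ℝ).symm ((H t)⁻¹.mulVec (g t (p t))) :=
      sub_right_comm _ _ _
    rw [hveq] at had
    have hexp := expand_temp hPD ((p t - ν t : EuclideanSpace ℝ (Fin d))) ((g t (p t) : Fin d → ℝ)) η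
    have had2 : (p (t+1) - ν (t+1)) ⬝ᵥ (H t) *ᵥ (p (t+1) - ν (t+1)) ≤
        ((p t - ν t) ⬝ᵥ (H t) *ᵥ (p t - ν t))
        - 2 * η * ((g t (p t) : Fin d → ℝ) ⬝ᵥ (p t - ν t))
        + η ^ 2 * ((g t (p t) : Fin d → ℝ) ⬝ᵥ (H t)⁻¹ *ᵥ (g t (p t) : Fin d → ℝ)) := by
      refine had.trans_eq ?_
      simp only [WithLp.ofLp_sub, WithLp.ofLp_smul] at hexp ⊢
      rw [← hexp]
      congr 2
      exact sub_right_comm _ _ _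
    linarith
  -- second-order term bound
  have hrb : ∀ t ∈ Icc 1 T,
      (g t (p t) : Fin d → ℝ) ⬝ᵥ (H t)⁻¹ *ᵥ (g t (p t) : Fin d → ℝ) ≤
        2 * ((H t).trace - (H (t-1)).trace) := by
    intro t ht
    rw [mem_Icc] at ht
    have htT := ht.2
    have hPD := hHPD t htT
    have hdet : IsUnit (H t).det := hPD.det_pos.ne'.isUnit
    have hB := hH (t-1) (by omega)
    have e0 : (H t)⁻¹ * Gm t
        = (H t)⁻¹ * Gm (t-1) + (H t)⁻¹ * Matrix.vecMulVec (g t (p t) : Fin d → ℝ) (g t (p t) : Fin d → ℝ) := by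
      rw [hGrec t (mem_Icc.mpr ht), Matrix.mul_add]
    have e1 : ((H t)⁻¹ * Gm t).trace = (H t).trace := by
      rw [← (hH t htT).2, ← Matrix.mul_assoc, Matrix.nonsing_inv_mul _ hdet, Matrix.one_mul]
    have e2 : 2 * (H (t-1)).trace - (H t).trace ≤ ((H t)⁻¹ * Gm (t-1)).trace := by
      rw [← hB.2]
      exact trace_inv_sq_ge hPD hB.1.1
    have e3 : ((H t)⁻¹ * Matrix.vecMulVec (g t (p t) : Fin d → ℝ) (g t (p t) : Fin d → ℝ)).trace
        = (g t (p t) : Fin d → ℝ) ⬝ᵥ (H t)⁻¹ *ᵥ (g t (p t) : Fin d → ℝ) :=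
      trace_mul_vecMulVec _ _
    have e4 := congrArg Matrix.trace e0
    rw [Matrix.trace_add, e1, e3] at e4
    linarith
  -- reindexing
  have hreidx : ∀ f : ℕ → ℝ, ∑ t ∈ Icc 1 T, f t = ∑ i ∈ range T, f (i + 1) := by
    intro f
    rw [← Finset.Ico_add_one_right_eq_Icc, Finset.sum_Ico_eq_sum_range]
    simp [add_comm]
  -- sum of second-order terms telescopes
  have hrsum : ∑ t ∈ Icc 1 T, ((g t (p t) : Fin d → ℝ) ⬝ᵥ (H t)⁻¹ *ᵥ (g t (p t) : Fin d → ℝ))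
      ≤ 2 * ((H T).trace - (H 0).trace) := by
    rw [hreidx]
    have htel : ∑ i ∈ range T, 2 * ((H (i+1)).trace - (H i).trace)
        = 2 * ((H T).trace - (H 0).trace) := by
      rw [← Finset.mul_sum, Finset.sum_range_sub (fun i => (H i).trace)]
    rw [← htel]
    refine Finset.sum_le_sum fun i hi => ?_
    have hmem : i + 1 ∈ Icc 1 T := mem_Icc.mpr ⟨by omega, by
      have := Finset.mem_range.mp hi; omega⟩
    have := hrb (i+1) hmem
    simpa using this
  -- telescoping of the quadratic terms
  have hFφ : ∑ t ∈ Icc 1 T,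
      (((p t - ν t) ⬝ᵥ (H t) *ᵥ (p t - ν t))
        - ((p (t+1) - ν (t+1)) ⬝ᵥ (H t) *ᵥ (p (t+1) - ν (t+1))))
      ≤ D ^ 2 * (H T).trace := by
    rw [hreidx]
    have hkey : ∀ i ∈ range T,
        ((p (i+1) - ν (i+1)) ⬝ᵥ (H (i+1)) *ᵥ (p (i+1) - ν (i+1)))
          - ((p (i+1+1) - ν (i+1+1)) ⬝ᵥ (H (i+1)) *ᵥ (p (i+1+1) - ν (i+1+1)))
        ≤ D ^ 2 * ((H (i+1)).trace - (H i).trace)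
          + (((p (i+1) - ν (i+1)) ⬝ᵥ (H i) *ᵥ (p (i+1) - ν (i+1)))
            - ((p (i+1+1) - ν (i+1+1)) ⬝ᵥ (H (i+1)) *ᵥ (p (i+1+1) - ν (i+1+1)))) := by
      intro i hi
      have hiT := Finset.mem_range.mp hi
      have hmem : i + 1 ∈ Icc 1 T := mem_Icc.mpr ⟨by omega, by omega⟩
      have hpsd : (H (i+1) - H i).PosSemidef := by
        have := hHmono (i+1) hmem
        simpa using this
      have hq := quadform_le_trace hpsd ((p (i+1) - ν (i+1) : EuclideanSpace ℝ (Fin d)))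
      have hqd : (p (i+1) - ν (i+1)) ⬝ᵥ (H (i+1) - H i) *ᵥ (p (i+1) - ν (i+1))
          = (p (i+1) - ν (i+1)) ⬝ᵥ (H (i+1)) *ᵥ (p (i+1) - ν (i+1))
            - (p (i+1) - ν (i+1)) ⬝ᵥ (H i) *ᵥ (p (i+1) - ν (i+1)) := by
        rw [Matrix.sub_mulVec, dotProduct_sub]
      have htr : (H (i+1) - H i).trace = (H (i+1)).trace - (H i).trace := Matrix.trace_sub _ _
      have htr0 : 0 ≤ (H (i+1)).trace - (H i).trace := by
        have := trace_nonneg_of_psd hpsd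
        rwa [htr] at this
      have hxle := hxD (i+1) (mem_Icc.mpr ⟨by omega, by omega⟩)
      have hxge := hxx0 (i+1)
      have hmul : ((p (i+1) - ν (i+1)) ⬝ᵥ (p (i+1) - ν (i+1))) * ((H (i+1)).trace - (H i).trace)
          ≤ D ^ 2 * ((H (i+1)).trace - (H i).trace) :=
        mul_le_mul_of_nonneg_right hxle htr0
      simp only [WithLp.ofLp_sub] at *
      rw [hqd, htr] at hq
      linarith
    have hsum := Finset.sum_le_sum hkey
    refine hsum.trans ?_
    rw [Finset.sum_add_distrib, ← Finset.mul_sum,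
      Finset.sum_range_sub (fun i => (H i).trace),
      Finset.sum_range_sub' (fun i => ((p (i+1) - ν (i+1)) ⬝ᵥ (H i) *ᵥ (p (i+1) - ν (i+1))))]
    have hφ0 : (p 1 - ν 1) ⬝ᵥ (H 0) *ᵥ (p 1 - ν 1) ≤ D ^ 2 * (H 0).trace := by
      have hq := quadform_le_trace (hH 0 (by omega)).1 ((p 1 - ν 1 : EuclideanSpace ℝ (Fin d)))
      have hxle := hxD 1 (mem_Icc.mpr ⟨le_refl 1, by omega⟩)
      have htr0 : 0 ≤ (H 0).trace := trace_nonneg_of_psd (hH 0 (by omega)).1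
      simp only [WithLp.ofLp_sub] at *
      nlinarith [hxx0 1]
    have hφT : 0 ≤ (p (T+1) - ν (T+1)) ⬝ᵥ (H T) *ᵥ (p (T+1) - ν (T+1)) := by
      have := (hH T le_rfl).1.dotProduct_mulVec_nonneg (p (T+1) - ν (T+1))
      simpa using this
    linarith
  -- sum of gradient terms
  have hbsum : ∑ t ∈ Icc 1 T, ((g t (p t) : Fin d → ℝ) ⬝ᵥ (p t - ν t))
      ≤ Real.sqrt 2 * D * (H T).trace := by
    have hsb := Finset.sum_le_sum hstep
    rw [← Finset.mul_sum] at hsb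
    rw [Finset.sum_add_distrib, ← Finset.mul_sum] at hsb
    have hτ0 : 0 ≤ (H 0).trace := trace_nonneg_of_psd (hH 0 (by omega)).1
    have hτT : 0 ≤ (H T).trace := trace_nonneg_of_psd (hH T le_rfl).1
    have hcomb : 2 * η * (∑ t ∈ Icc 1 T, ((g t (p t) : Fin d → ℝ) ⬝ᵥ (p t - ν t)))
        ≤ (D ^ 2 + 2 * η ^ 2) * (H T).trace := by
      have h1 : η ^ 2 * (∑ t ∈ Icc 1 T, ((g t (p t) : Fin d → ℝ) ⬝ᵥ (H t)⁻¹ *ᵥ (g t (p t) : Fin d → ℝ)))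
          ≤ η ^ 2 * (2 * ((H T).trace - (H 0).trace)) :=
        mul_le_mul_of_nonneg_left hrsum (by positivity)
      nlinarith [hFφ]
    have hd' : η * Real.sqrt 2 = D := by
      rw [hη]
      field_simp
    have hid : 2 * η * (Real.sqrt 2 * D) = D ^ 2 + 2 * η ^ 2 := by
      rw [← hd']
      linear_combination (η ^ 2) * hsq2
    have heq2 : (D ^ 2 + 2 * η ^ 2) * (H T).trace
        = 2 * η * (Real.sqrt 2 * D * (H T).trace) := by
      rw [← hid]
      ring
    have h2η : (0:ℝ) < 2 * η := by linarith
    exact (mul_le_mul_iff_right₀ h2η).mp (hcomb.trans_eq heq2)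
  -- per-step loss inequality
  have hloss : ∀ t ∈ Icc 1 T, ℓ t (p t) - ℓ t (μstar t) ≤
      ((g t (p t) : Fin d → ℝ) ⬝ᵥ (p t - ν t))
      + (G * ‖ν (t+1) - ν t‖ - lam * ‖ν (t+1) - ν t‖ ^ 2)
      + G ^ 2 * (1 + Real.log T) / (lam * T) := by
    intro t ht
    have ht' := mem_Icc.mp ht
    have hpmem := hpK t (mem_Icc.mpr ⟨ht'.1, by omega⟩)
    have hνmem := hνK t (mem_Icc.mpr ⟨ht'.1, by omega⟩)
    have hνmem1 := hνK (t+1) (mem_Icc.mpr ⟨by omega, by omega⟩)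
    have h1 := hsc t ht (p t) hpmem (ν t) hνmem
    have h2 := hsc t ht (ν t) hνmem (ν (t+1)) hνmem1
    have h3 := hνgood t ht
    have hi1 : (inner ℝ (g t (p t)) (p t - ν t) : ℝ)
        = (g t (p t) : Fin d → ℝ) ⬝ᵥ (p t - ν t) := hinner _ _
    have hgb := hGb t ht (ν t) hνmem
    have hi2 : (inner ℝ (g t (ν t)) (ν t - ν (t+1)) : ℝ) ≤ G * ‖ν (t+1) - ν t‖ := by
      calc (inner ℝ (g t (ν t)) (ν t - ν (t+1)) : ℝ)
          ≤ ‖g t (ν t)‖ * ‖ν t - ν (t+1)‖ := real_inner_le_norm _ _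
        _ ≤ G * ‖ν t - ν (t+1)‖ := mul_le_mul_of_nonneg_right hgb (norm_nonneg _)
        _ = G * ‖ν (t+1) - ν t‖ := by rw [norm_sub_rev]
    have hnrev : ‖ν t - ν (t+1)‖ = ‖ν (t+1) - ν t‖ := norm_sub_rev _ _
    rw [hi1] at h1
    rw [hnrev] at h2
    have hsq1 : 0 ≤ lam * ‖p t - ν t‖ ^ 2 := by positivity
    linarith [h1, h2, h3, hi2]
  -- assemble
  have hsum1 := Finset.sum_le_sum hloss
  rw [Finset.sum_add_distrib, Finset.sum_add_distrib, Finset.sum_sub_distrib,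
    Finset.sum_sub_distrib, ← Finset.mul_sum, ← Finset.mul_sum, Finset.sum_const,
    Nat.card_Icc] at hsum1
  have hconst : (T + 1 - 1) • (G ^ 2 * (1 + Real.log T) / (lam * T))
      = G ^ 2 / lam * (1 + Real.log T) := by
    simp only [Nat.add_sub_cancel, nsmul_eq_mul]
    field_simp
  rw [hconst] at hsum1
  have hsD : (0:ℝ) ≤ Real.sqrt 2 * D := by positivity
  have hfinal : Real.sqrt 2 * D * (H T).trace ≤ Real.sqrt 2 * D * (1 + (H T).trace) := by
    nlinarith
  linarith [hbsum, hsum1]
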